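/- For every word u of length ℓ over a finite alphabet A, ζ(u) = max over 0 ≤ i < ℓ of max{ n ∈ ℕ | αⁿ(i) is defined and αⁿ(i) ≤ i + ℓ }, where α is the arch-jumping function of the word w = u·u. -/

import Mathlib

/-- The subword universality index `ι(u)`: the largest `k` such that every word of
length `k` over the alphabet `A` is a subword (subsequence) of `u`. -/
noncomputable def univIndex {A : Type*} (u : List A) : ℕ :=
  sSup {k : ℕ | ∀ w : List A, w.length = k → w.Sublist u}

/-- The circular subword universality index `ζ(u)`: the maximum of `ι(u')` over all
conjugates `u'` of `u` (equivalently, over all rotations of `u`). -/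
noncomputable def circIndex {A : Type*} (u : List A) : ℕ :=
  (Finset.range (u.length + 1)).sup fun i => univIndex (u.drop i ++ u.take i)

open Classical in
/-- The arch-jumping function `α` of a word `w`: `α(i)` is the least `j` such that the
factor `w(i,j)` contains every letter of the alphabet `A`, undefined if no such `j` exists. -/
noncomputable def alphaJump {A : Type*} (w : List A) (i : ℕ) : Option ℕ :=
  if ∃ j, ∀ a : A, a ∈ (w.take j).drop i then
    some (sInf {j : ℕ | ∀ a : A, a ∈ (w.take j).drop i})
  else none

/-- `αⁿ(i)`: the `n`-fold iteration of the arch-jumping function `α` of `w`, starting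
from position `i`; `none` if some intermediate step is undefined. -/
noncomputable def alphaIter {A : Type*} (w : List A) (n i : ℕ) : Option ℕ :=
  (fun o => o.bind (alphaJump w))^[n] (some i)


set_option linter.unusedSectionVars false

section Aux
variable {A : Type*} [Nonempty A]

lemma slice_sublist (w : List A) (i : ℕ) {j j' : ℕ} (h : j ≤ j') :
    ((w.take j).drop i).Sublist ((w.take j').drop i) := by
  have h1 : w.take j = (w.take j').take j := by rw [List.take_take, min_eq_left h]
  rw [h1]
  exact ((w.take j').take_sublist j).drop i

lemma slice_sublist_drop (w : List A) (i j : ℕ) :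
    ((w.take j).drop i).Sublist (w.drop i) :=
  (w.take_sublist j).drop i

lemma alphaJump_eq_none_iff (w : List A) (i : ℕ) :
    alphaJump w i = none ↔ ∃ a : A, a ∉ w.drop i := by
  rw [alphaJump]
  split_ifs with h
  · simp only [reduceCtorEq, false_iff]
    obtain ⟨j, hj⟩ := h
    push_neg
    intro a
    exact (slice_sublist_drop w i j).subset (hj a)
  · simp only [true_iff]
    push_neg at h
    obtain ⟨a, ha⟩ := h w.length
    exact ⟨a, by simpa using ha⟩

lemma alphaJump_eq_some_iff (w : List A) (i j : ℕ) :
    alphaJump w i = some j ↔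
      (∀ a : A, a ∈ (w.take j).drop i) ∧ ∀ j' < j, ∃ a : A, a ∉ (w.take j').drop i := by
  rw [alphaJump]
  split_ifs with h
  · simp only [Option.some_inj]
    constructor
    · rintro rfl
      refine ⟨Nat.sInf_mem h, fun j' hj' => ?_⟩
      have := Nat.notMem_of_lt_sInf hj'
      simpa using this
    · rintro ⟨h1, h2⟩
      refine le_antisymm (Nat.sInf_le h1) ?_
      by_contra hlt
      push_neg at hlt
      obtain ⟨a, ha⟩ := h2 _ hlt
      exact ha (Nat.sInf_mem h a)
  · simp only [reduceCtorEq, false_iff]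
    rintro ⟨h1, _⟩
    exact h ⟨j, h1⟩

lemma alphaJump_lt (w : List A) {i j : ℕ} (h : alphaJump w i = some j) : i < j := by
  rw [alphaJump_eq_some_iff] at h
  by_contra hle
  push_neg at hle
  have a := Classical.arbitrary A
  have := h.1 a
  rw [List.drop_eq_nil_of_le (le_trans (by simp [List.length_take]) hle)] at this
  simp at this

lemma alphaJump_le_length (w : List A) {i j : ℕ} (h : alphaJump w i = some j) :
    j ≤ w.length := by
  rw [alphaJump_eq_some_iff] at h
  by_contra hlt
  push_neg at hlt
  obtain ⟨a, ha⟩ := h.2 w.length hlt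
  rw [List.take_length] at ha
  have := h.1 a
  rw [List.take_of_length_le (le_of_lt hlt)] at this
  exact ha this


lemma slice_eq (w : List A) {i p q L : ℕ} (hp : i ≤ p) (hq : q ≤ L) :
    ((((w.drop i).take L).take q).drop (p - i)) = (w.take (i + q)).drop p := by
  rw [List.take_take, min_eq_left hq, List.drop_take, List.drop_drop, List.drop_take]
  have h1 : i + (p - i) = p := by omega
  rw [h1]
  congr 1
  omega

lemma slice_split (v : List A) {p p₁ j : ℕ} (h1 : p ≤ p₁) (h2 : p₁ ≤ j) :
    (v.take j).drop p = (v.take p₁).drop p ++ (v.take j).drop p₁ := by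
  conv_lhs => rw [← List.take_append_drop (p₁ - p) ((v.take j).drop p)]
  congr 1
  · rw [List.drop_take, List.take_take, min_eq_left (by omega : p₁ - p ≤ j - p),
      ← List.drop_take]
  · rw [List.drop_drop]
    congr 1
    omega

lemma alphaIter_zero (w : List A) (i : ℕ) : alphaIter w 0 i = some i := rfl

lemma alphaIter_none (w : List A) (n : ℕ) :
    (fun o => o.bind (alphaJump w))^[n] none = none := by
  induction n with
  | zero => rfl
  | succ n ih => rw [Function.iterate_succ_apply, Option.bind_none, ih]

lemma alphaIter_succ (w : List A) (n i : ℕ) :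
    alphaIter w (n + 1) i =
      (alphaJump w i).elim none (fun p => alphaIter w n p) := by
  rw [alphaIter, Function.iterate_succ_apply, Option.bind_some]
  cases h : alphaJump w i with
  | none => exact alphaIter_none w n
  | some p => rfl

lemma alphaIter_succ' (w : List A) (n i : ℕ) :
    alphaIter w (n + 1) i = (alphaIter w n i).bind (alphaJump w) := by
  rw [alphaIter, Function.iterate_succ_apply']
  rfl

lemma alphaIter_le (w : List A) : ∀ n p j, alphaIter w n p = some j → p + n ≤ j ∧ (0 < n → j ≤ w.length) := by
  intro n
  induction n with
  | zero => intro p j h; rw [alphaIter_zero] at h; simp at h; omega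
  | succ n ih =>
    intro p j h
    rw [alphaIter_succ] at h
    cases hα : alphaJump w p with
    | none => rw [hα] at h; simp at h
    | some p₁ =>
      rw [hα] at h
      simp only [Option.elim] at h
      have h1 := alphaJump_lt w hα
      have h2 := alphaJump_le_length w hα
      have := ih p₁ j h
      rcases n with _ | n
      · rw [alphaIter_zero] at h; simp at h; omega
      · have := this.2 (by omega); omega


lemma alphaJump_corr (w : List A) {i L : ℕ} (hL : i + L ≤ w.length) {q : ℕ} (hq : q ≤ L)
    (q' : ℕ) :
    alphaJump ((w.drop i).take L) q = some q' ↔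
      alphaJump w (i + q) = some (i + q') ∧ q' ≤ L := by
  have hrlen : ((w.drop i).take L).length = L := by
    rw [List.length_take, List.length_drop]; omega
  have key : ∀ t, t ≤ L →
      (((w.drop i).take L).take t).drop q = (w.take (i + t)).drop (i + q) := by
    intro t ht
    have := slice_eq (A := A) w (i := i) (p := i + q) (q := t) (L := L) (by omega) ht
    rw [show i + q - i = q by omega] at this
    exact this
  constructor
  · intro h
    have hle : q' ≤ L := by
      have h2 := alphaJump_le_length _ h
      rw [hrlen] at h2
      exact h2
    rw [alphaJump_eq_some_iff] at h ⊢
    refine ⟨⟨fun a => (key q' hle) ▸ h.1 a, fun j' hj' => ?_⟩, hle⟩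
    by_cases hji : i + q < j'
    · obtain ⟨a, ha⟩ := h.2 (j' - i) (by omega)
      refine ⟨a, fun hmem => ha ?_⟩
      have hj'L : j' - i ≤ L := by omega
      rw [key (j' - i) hj'L, show i + (j' - i) = j' by omega]
      exact hmem
    · push_neg at hji
      have a := Classical.arbitrary A
      refine ⟨a, fun hmem => ?_⟩
      rw [List.drop_eq_nil_of_le (le_trans (by simp [List.length_take]) hji)] at hmem
      simp at hmem
  · rintro ⟨h, hle⟩
    rw [alphaJump_eq_some_iff] at h ⊢
    refine ⟨fun a => (key q' hle).symm ▸ h.1 a, fun t ht => ?_⟩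
    obtain ⟨a, ha⟩ := h.2 (i + t) (by omega)
    exact ⟨a, fun hmem => ha ((key t (by omega)) ▸ hmem)⟩

lemma alphaIter_corr (w : List A) {i L : ℕ} (hL : i + L ≤ w.length) :
    ∀ n q, q ≤ L →
      ((∃ j, alphaIter w n (i + q) = some j ∧ j ≤ i + L) ↔
        (∃ q', alphaIter ((w.drop i).take L) n q = some q')) := by
  intro n
  induction n with
  | zero =>
    intro q hq
    simp only [alphaIter_zero, Option.some_inj]
    constructor
    · intro _; exact ⟨q, rfl⟩
    · intro _; exact ⟨i + q, rfl, by omega⟩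
  | succ n ih =>
    intro q hq
    rw [alphaIter_succ, alphaIter_succ]
    cases hr : alphaJump ((w.drop i).take L) q with
    | some q₁ =>
      rw [alphaJump_corr w hL hq q₁] at hr
      rw [hr.1]
      simp only [Option.elim]
      exact ih q₁ hr.2
    | none =>
      simp only [Option.elim]
      constructor
      · rintro ⟨j, hj, hjle⟩
        exfalso
        cases hw : alphaJump w (i + q) with
        | none => rw [hw] at hj; simp at hj
        | some j₁ =>
          rw [hw] at hj
          simp only [Option.elim] at hj
          have hj₁ : j₁ ≤ j := by have := (alphaIter_le w n j₁ j hj).1; omega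
          have hij₁ : i + q < j₁ := alphaJump_lt w hw
          have : alphaJump ((w.drop i).take L) q = some (j₁ - i) := by
            rw [alphaJump_corr w hL hq, show i + (j₁ - i) = j₁ by omega]
            exact ⟨hw, by omega⟩
          rw [hr] at this; cases this
      · rintro ⟨q', hq'⟩
        exact absurd hq' (by simp)

lemma rot_eq (u : List A) {i : ℕ} (h : i ≤ u.length) :
    ((u ++ u).drop i).take u.length = u.drop i ++ u.take i := by
  rw [List.drop_append, show i - u.length = 0 by omega, List.drop_zero,
    List.take_append, List.take_of_length_le (by rw [List.length_drop]; omega),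
    List.length_drop, show u.length - (u.length - i) = i by omega]


lemma sublist_of_iter (v : List A) : ∀ n p j, alphaIter v n p = some j →
    ∀ x : List A, x.length = n → x.Sublist ((v.take j).drop p) := by
  intro n
  induction n with
  | zero =>
    intro p j h x hx
    rw [List.length_eq_zero_iff] at hx
    subst hx
    exact List.nil_sublist _
  | succ n ih =>
    intro p j h x hx
    rw [alphaIter_succ] at h
    cases hα : alphaJump v p with
    | none => rw [hα] at h; simp at h
    | some p₁ =>
      rw [hα] at h
      simp only [Option.elim] at h
      cases x with
      | nil => simp at hx
      | cons a x' =>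
        have hp₁ : p ≤ p₁ := le_of_lt (alphaJump_lt v hα)
        have hp₁j : p₁ ≤ j := by have := (alphaIter_le v n p₁ j h).1; omega
        rw [slice_split v hp₁ hp₁j]
        have ha : a ∈ (v.take p₁).drop p := ((alphaJump_eq_some_iff v p p₁).mp hα).1 a
        have hx' : x'.Sublist ((v.take j).drop p₁) := ih p₁ j h x' (by simpa using hx)
        exact (List.singleton_sublist.mpr ha).append hx'

lemma skip_lemma (v : List A) {p j : ℕ} {b : A} (hbj : b ∉ (v.take (j - 1)).drop p)
    {y : List A} (hy : (b :: y).Sublist (v.drop p)) : y.Sublist (v.drop j) := by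
  rw [List.cons_sublist_iff] at hy
  obtain ⟨r₁, r₂, heq, hb, hyr⟩ := hy
  have hr₁ : r₁ = (v.drop p).take r₁.length := by
    rw [heq, List.take_append]
    simp
  have hr₂ : r₂ = v.drop (p + r₁.length) := by
    have : r₂ = (v.drop p).drop r₁.length := by
      rw [heq, List.drop_append]
      simp
    rw [this, List.drop_drop]
  have hlen : j ≤ p + r₁.length := by
    by_contra hlt
    push_neg at hlt
    apply hbj
    rw [List.drop_take]
    have : r₁.Sublist ((v.drop p).take (j - 1 - p)) := by
      rw [hr₁]
      have := List.take_take (i := r₁.length) (j := j - 1 - p) (l := v.drop p)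
      rw [min_eq_left (by omega)] at this
      rw [← this]
      exact List.take_sublist _ _
    exact this.subset hb
  have : r₂.Sublist (v.drop j) := by
    rw [hr₂, show p + r₁.length = j + (p + r₁.length - j) by omega, ← List.drop_drop]
    exact List.drop_sublist _ _
  exact hyr.trans this

lemma bad_word (v : List A) : ∀ n p j, alphaIter v n p = some j → alphaJump v j = none →
    ∃ x : List A, x.length = n + 1 ∧ ¬ x.Sublist (v.drop p) := by
  intro n
  induction n with
  | zero =>
    intro p j h hnone
    rw [alphaIter_zero, Option.some_inj] at h
    subst h
    obtain ⟨c, hc⟩ := (alphaJump_eq_none_iff v p).mp hnone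
    exact ⟨[c], rfl, fun hsub => hc (List.singleton_sublist.mp hsub)⟩
  | succ n ih =>
    intro p j h hnone
    rw [alphaIter_succ] at h
    cases hα : alphaJump v p with
    | none => rw [hα] at h; simp at h
    | some p₁ =>
      rw [hα] at h
      simp only [Option.elim] at h
      obtain ⟨x, hxlen, hxsub⟩ := ih p₁ j h hnone
      have hp₁ : p < p₁ := alphaJump_lt v hα
      obtain ⟨b, hb⟩ := ((alphaJump_eq_some_iff v p p₁).mp hα).2 (p₁ - 1) (by omega)
      refine ⟨b :: x, by simp [hxlen], fun hsub => hxsub ?_⟩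
      exact skip_lemma v hb hsub

lemma univIndex_eq_archCount (v : List A) :
    univIndex v = sSup {n : ℕ | ∃ j, alphaIter v n 0 = some j} := by
  set S : Set ℕ := {n : ℕ | ∃ j, alphaIter v n 0 = some j} with hS
  have hSne : S.Nonempty := ⟨0, 0, rfl⟩
  have hSbdd : BddAbove S := by
    refine ⟨v.length, fun n hn => ?_⟩
    obtain ⟨j, hj⟩ := hn
    have := alphaIter_le v n 0 j hj
    rcases Nat.eq_zero_or_pos n with h0 | h0
    · omega
    · have := this.2 h0; omega
  set N := sSup S with hN
  obtain ⟨jN, hjN⟩ := Nat.sSup_mem hSne hSbdd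
  have hnone : alphaJump v jN = none := by
    cases hα : alphaJump v jN with
    | none => rfl
    | some p' =>
      exfalso
      have : N + 1 ∈ S := by
        refine ⟨p', ?_⟩
        rw [alphaIter_succ']
        rw [hjN, Option.bind_some]
        exact hα
      have := le_csSup hSbdd this
      omega
  set U : Set ℕ := {k : ℕ | ∀ x : List A, x.length = k → x.Sublist v} with hU
  have hUne : U.Nonempty := by
    refine ⟨0, fun x hx => ?_⟩
    rw [List.length_eq_zero_iff] at hx
    subst hx
    exact List.nil_sublist v
  have hUbdd : BddAbove U := by
    refine ⟨v.length, fun k hk => ?_⟩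
    have a := Classical.arbitrary A
    have := hk (List.replicate k a) (List.length_replicate (n := k) (a := a))
    simpa using this.length_le
  apply le_antisymm
  · -- univIndex ≤ N
    apply csSup_le hUne
    intro k hk
    by_contra hlt
    push_neg at hlt
    obtain ⟨x, hxlen, hxsub⟩ := bad_word v N 0 jN hjN hnone
    rw [List.drop_zero] at hxsub
    have a := Classical.arbitrary A
    have hbig := hk (List.replicate (k - (N + 1)) a ++ x)
      (by simp [hxlen]; omega)
    exact hxsub ((List.sublist_append_right _ _).trans hbig)
  · -- N ≤ univIndex
    apply le_csSup hUbdd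
    intro x hxlen
    have := sublist_of_iter v N 0 jN hjN x hxlen
    rw [List.drop_zero] at this
    exact this.trans (List.take_sublist _ _)


lemma univIndex_le_length (v : List A) : univIndex v ≤ v.length := by
  apply csSup_le
  · refine ⟨0, fun x hx => ?_⟩
    rw [List.length_eq_zero_iff] at hx
    subst hx
    exact List.nil_sublist v
  · intro k hk
    have a := Classical.arbitrary A
    have := hk (List.replicate k a) (List.length_replicate (n := k) (a := a))
    simpa using this.length_le

end Aux

/-- `ζ(u) = max_{0 ≤ i < ℓ} max{ n | αⁿ(i) is defined and αⁿ(i) ≤ i + ℓ }`, where `α` is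
the arch-jumping function of the word `w = u·u` and `ℓ = |u|`. -/
theorem circIndex_via_alphaIter {A : Type*} [Fintype A] [Nonempty A] (u : List A) :
    circIndex u =
      (Finset.range u.length).sup fun i =>
        sSup {n : ℕ | ∃ j, alphaIter (u ++ u) n i = some j ∧ j ≤ i + u.length} := by
  set ℓ := u.length with hℓ
  have hG : ∀ i, i ≤ ℓ → univIndex (u.drop i ++ u.take i) =
      sSup {n : ℕ | ∃ j, alphaIter (u ++ u) n i = some j ∧ j ≤ i + ℓ} := by
    intro i hi
    rw [← rot_eq u hi, univIndex_eq_archCount]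
    have hsets : {n : ℕ | ∃ j, alphaIter (((u ++ u).drop i).take ℓ) n 0 = some j} =
        {n : ℕ | ∃ j, alphaIter (u ++ u) n i = some j ∧ j ≤ i + ℓ} := by
      ext n
      have hLw : i + ℓ ≤ (u ++ u).length := by
        simp only [List.length_append, ← hℓ]
        omega
      have h := alphaIter_corr (u ++ u) hLw n 0 (Nat.zero_le ℓ)
      rw [add_zero] at h
      exact h.symm
    rw [hsets]
  rw [circIndex]
  apply le_antisymm
  · apply Finset.sup_le
    intro i hi
    rw [Finset.mem_range] at hi
    have hi' : i ≤ ℓ := by omega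
    rcases Nat.lt_or_ge i ℓ with h | h
    · rw [hG i hi']
      exact Finset.le_sup
        (f := fun i => sSup {n : ℕ | ∃ j, alphaIter (u ++ u) n i = some j ∧ j ≤ i + ℓ})
        (Finset.mem_range.mpr h)
    · have hieq : i = ℓ := by omega
      subst hieq
      rcases Nat.eq_zero_or_pos ℓ with h0 | h0
      · have := univIndex_le_length (u.drop ℓ ++ u.take ℓ)
        simp only [List.length_append, List.length_drop, List.length_take, ← hℓ] at this
        omega
      · have hrot : u.drop ℓ ++ u.take ℓ = u.drop 0 ++ u.take 0 := by
          simp [hℓ]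
        rw [hrot, hG 0 (Nat.zero_le _)]
        exact Finset.le_sup
          (f := fun i => sSup {n : ℕ | ∃ j, alphaIter (u ++ u) n i = some j ∧ j ≤ i + ℓ})
          (Finset.mem_range.mpr h0)
  · apply Finset.sup_le
    intro i hi
    rw [Finset.mem_range] at hi
    refine le_trans (le_of_eq (hG i (le_of_lt hi)).symm) ?_
    exact Finset.le_sup
      (f := fun i => univIndex (u.drop i ++ u.take i))
      (Finset.mem_range.mpr (by omega))
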